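/- Let D ⊆ ℝ^n be a domain and f : D → ℝ^n a continuous open map that is closed onto its image f(D) (i.e. maps sets closed in D to sets closed in f(D)). Then for every x₀ ∈ D̄ ∩ ℝ^n and every r > 0, the set (∂(f(B(x₀,r) ∩ D))) ∩ f(D) is contained in f(S(x₀,r) ∩ D), where B(x₀,r) is the open ball and S(x₀,r) the sphere of radius r about x₀. -/

import Mathlib

/-- If `D ⊆ ℝⁿ` is a domain and `f` is continuous and open on `D`, and closed
onto its image (closed subsets of `D` map to closed subsets of `f(D)`), then for every
`x₀ ∈ closure D` and `r > 0`,
`∂(f(B(x₀,r) ∩ D)) ∩ f(D) ⊆ f(S(x₀,r) ∩ D)`. -/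
theorem stmt5 (n : ℕ) (D : Set (EuclideanSpace ℝ (Fin n)))
    (hD : IsOpen D) (hDc : IsConnected D)
    (f : EuclideanSpace ℝ (Fin n) → EuclideanSpace ℝ (Fin n))
    (hf : ContinuousOn f D)
    (hopen : ∀ U ⊆ D, IsOpen U → IsOpen (f '' U))
    (hclosed : ∀ C ⊆ D, closure C ∩ D = C → closure (f '' C) ∩ f '' D = f '' C) :
    ∀ x₀ ∈ closure D, ∀ r > (0 : ℝ),
      frontier (f '' (Metric.ball x₀ r ∩ D)) ∩ f '' D ⊆
        f '' (Metric.sphere x₀ r ∩ D) := by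
  intro x₀ _ r _ y hy
  obtain ⟨hyf, hyD⟩ := hy
  have hopenB : IsOpen (f '' (Metric.ball x₀ r ∩ D)) :=
    hopen _ Set.inter_subset_right (Metric.isOpen_ball.inter hD)
  have hCrel : closure (Metric.closedBall x₀ r ∩ D) ∩ D = Metric.closedBall x₀ r ∩ D := by
    apply Set.Subset.antisymm
    · intro z hz
      exact ⟨(IsClosed.closure_subset_iff Metric.isClosed_closedBall).mpr Set.inter_subset_left hz.1,
        hz.2⟩
    · exact Set.subset_inter subset_closure Set.inter_subset_right
  have hfc := hclosed _ Set.inter_subset_right hCrel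
  have hyclos : y ∈ closure (f '' (Metric.closedBall x₀ r ∩ D)) := by
    have h1 : y ∈ closure (f '' (Metric.ball x₀ r ∩ D)) := frontier_subset_closure hyf
    exact closure_mono (Set.image_mono
      (Set.inter_subset_inter_left _ Metric.ball_subset_closedBall)) h1
  have hyC : y ∈ f '' (Metric.closedBall x₀ r ∩ D) := hfc ▸ ⟨hyclos, hyD⟩
  obtain ⟨x, ⟨hx1, hx2⟩, rfl⟩ := hyC
  have hnot : f x ∉ f '' (Metric.ball x₀ r ∩ D) := by
    rw [hopenB.frontier_eq] at hyf
    exact hyf.2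
  have hxsphere : x ∈ Metric.sphere x₀ r := by
    rw [Metric.mem_sphere]
    rcases lt_or_eq_of_le (Metric.mem_closedBall.mp hx1) with h | h
    · exact absurd ⟨x, ⟨Metric.mem_ball.mpr h, hx2⟩, rfl⟩ hnot
    · exact h
  exact ⟨x, ⟨hxsphere, hx2⟩, rfl⟩
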